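/- Let U, V be n×r matrices with orthonormal columns, Δ = I − (VᵀU)(VᵀU)ᵀ, and Z ∈ S^r_+. Then ‖VZVᵀ − UUᵀ(VZVᵀ)UUᵀ‖_F² = 2 tr(Z²Δ) − ‖Z^{1/2} Δ Z^{1/2}‖_F², and in particular this quantity is at most 2‖Z‖_F² λ_max(Δ). -/

import Mathlib

open Matrix BigOperators

/-- The Frobenius norm of a real matrix. -/
noncomputable def frobNorm {m k : ℕ} (A : Matrix (Fin m) (Fin k) ℝ) : ℝ :=
  Real.sqrt (∑ i, ∑ j, (A i j) ^ 2)

lemma frobSq {m k : ℕ} (A : Matrix (Fin m) (Fin k) ℝ) :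
    frobNorm A ^ 2 = (Aᵀ * A).trace := by
  unfold frobNorm
  rw [Real.sq_sqrt (by positivity)]
  rw [Matrix.trace, Finset.sum_comm]
  simp [Matrix.diag, Matrix.mul_apply, sq]

lemma trace_nonneg_of_psd {m : ℕ} {A : Matrix (Fin m) (Fin m) ℝ} (hA : A.PosSemidef) :
    0 ≤ A.trace :=
  Finset.sum_nonneg fun i _ => by simpa using hA.2 (Finsupp.single i 1)

theorem dist_identity_and_bound {n r : ℕ} (U V : Matrix (Fin n) (Fin r) ℝ)
    (hU : Uᵀ * U = 1) (hV : Vᵀ * V = 1)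
    (Z : Matrix (Fin r) (Fin r) ℝ) (hZ : Z.PosSemidef)
    (S : Matrix (Fin r) (Fin r) ℝ) (hS : S.PosSemidef) (hSZ : S * S = Z) :
    let Δ : Matrix (Fin r) (Fin r) ℝ := 1 - (Vᵀ * U) * (Vᵀ * U)ᵀ
    (frobNorm (V * Z * Vᵀ - U * Uᵀ * (V * Z * Vᵀ) * U * Uᵀ)) ^ 2 =
        2 * ((Z * Z * Δ).trace) - (frobNorm (S * Δ * S)) ^ 2 ∧
      ∀ μ : ℝ, 0 ≤ μ → (μ • (1 : Matrix (Fin r) (Fin r) ℝ) - Δ).PosSemidef →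
        (frobNorm (V * Z * Vᵀ - U * Uᵀ * (V * Z * Vᵀ) * U * Uᵀ)) ^ 2 ≤
          2 * (frobNorm Z) ^ 2 * μ := by
  intro Δ
  have hZt : Zᵀ = Z := by
    have := hZ.1; rwa [← Matrix.conjTranspose_eq_transpose_of_trivial]
  have hSt : Sᵀ = S := by
    have := hS.1; rwa [← Matrix.conjTranspose_eq_transpose_of_trivial]
  have hΔ : Δ = 1 - (Vᵀ * U) * (Uᵀ * V) := by
    simp [Δ, Matrix.transpose_mul]
  have hΔt : Δᵀ = Δ := by
    simp [Δ, Matrix.transpose_sub, Matrix.transpose_mul, Matrix.mul_assoc]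
  have hVl : ∀ {p : ℕ} (X : Matrix (Fin r) (Fin p) ℝ), Vᵀ * (V * X) = X := by
    intro p X; rw [← Matrix.mul_assoc, hV, Matrix.one_mul]
  have hUl : ∀ {p : ℕ} (X : Matrix (Fin r) (Fin p) ℝ), Uᵀ * (U * X) = X := by
    intro p X; rw [← Matrix.mul_assoc, hU, Matrix.one_mul]
  have hSl : ∀ (X : Matrix (Fin r) (Fin r) ℝ), S * (S * X) = Z * X := by
    intro X; rw [← Matrix.mul_assoc, hSZ]
  set A := V * Z * Vᵀ with hA
  set B := U * Uᵀ * (V * Z * Vᵀ) * U * Uᵀ with hB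
  have hAt : Aᵀ = A := by
    simp [hA, Matrix.transpose_mul, hZt, Matrix.mul_assoc]
  have hBt : Bᵀ = B := by
    simp [hB, Matrix.transpose_mul, hZt, Matrix.mul_assoc]
  -- trace computations
  have eAA : (A * A).trace = (Z * Z).trace := by
    rw [show A * A = V * (Z * (Z * Vᵀ)) by simp [hA, Matrix.mul_assoc, hVl],
      Matrix.trace_mul_comm]
    simp [Matrix.mul_assoc, hV]
  have eAB : (A * B).trace = (Z * (Vᵀ*U*(Uᵀ*V)) * (Z * (Vᵀ*U*(Uᵀ*V)))).trace := by
    rw [show A * B = V * (Z * ((Vᵀ*U) * ((Uᵀ*V) * (Z * ((Vᵀ*U) * Uᵀ))))) by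
      simp [hA, hB, Matrix.mul_assoc], Matrix.trace_mul_comm]
    congr 1
    simp [Matrix.mul_assoc]
  have eBB : (B * B).trace = (Z * (Vᵀ*U*(Uᵀ*V)) * (Z * (Vᵀ*U*(Uᵀ*V)))).trace := by
    rw [show B * B = U * ((Uᵀ*V) * (Z * ((Vᵀ*U) * ((Uᵀ*V) * (Z * ((Vᵀ*U) * Uᵀ)))))) by
      simp [hB, Matrix.mul_assoc, hUl], Matrix.trace_mul_comm]
    rw [show (Uᵀ*V) * (Z * ((Vᵀ*U) * ((Uᵀ*V) * (Z * ((Vᵀ*U) * Uᵀ))))) * U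
        = (Uᵀ*V) * (Z * ((Vᵀ*U) * ((Uᵀ*V) * (Z * (Vᵀ*U))))) by
      simp [Matrix.mul_assoc, hU], Matrix.trace_mul_comm]
    congr 1
    simp [Matrix.mul_assoc]
  have cZΔZ : (Z * Δ * Z).trace = (Z * Z * Δ).trace := Matrix.trace_mul_cycle Z Δ Z
  -- algebra with Δ
  have eG : (Z * (Vᵀ*U*(Uᵀ*V)) * (Z * (Vᵀ*U*(Uᵀ*V)))).trace
      = (Z*Z).trace - 2*(Z*Z*Δ).trace + (Z*Δ*(Z*Δ)).trace := by
    have hG : (Vᵀ*U*(Uᵀ*V)) = 1 - Δ := by rw [hΔ]; exact (sub_sub_cancel _ _).symm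
    rw [hG, show Z * (1 - Δ) * (Z * (1 - Δ))
        = Z*Z - Z*(Z*Δ) - Z*Δ*Z + Z*Δ*(Z*Δ) by noncomm_ring]
    rw [Matrix.trace_add, Matrix.trace_sub, Matrix.trace_sub, cZΔZ, ← Matrix.mul_assoc]
    ring
  have eS : (frobNorm (S * Δ * S)) ^ 2 = (Z*Δ*(Z*Δ)).trace := by
    rw [frobSq, show (S*Δ*S)ᵀ = S*Δ*S by
      simp [Matrix.transpose_mul, hSt, hΔt, Matrix.mul_assoc]]
    rw [show (S*Δ*S)*(S*Δ*S) = S * (Δ*(Z*(Δ*S))) by simp [Matrix.mul_assoc, hSl],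
      Matrix.trace_mul_comm,
      show (Δ*(Z*(Δ*S)))*S = Δ * (Z*(Δ*Z)) by simp [Matrix.mul_assoc, hSZ],
      Matrix.trace_mul_comm]
    congr 1
    simp [Matrix.mul_assoc]
  have eX : (frobNorm (A - B)) ^ 2 = (Z*Z).trace - (Z * (Vᵀ*U*(Uᵀ*V)) * (Z * (Vᵀ*U*(Uᵀ*V)))).trace := by
    rw [frobSq, show (A - B)ᵀ = A - B by rw [Matrix.transpose_sub, hAt, hBt],
      show (A-B)*(A-B) = A*A - A*B - B*A + B*B by noncomm_ring,
      Matrix.trace_add, Matrix.trace_sub, Matrix.trace_sub,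
      Matrix.trace_mul_comm B A, eAA, eAB, eBB]
    ring
  have main : (frobNorm (A - B)) ^ 2 = 2 * ((Z * Z * Δ).trace) - (frobNorm (S * Δ * S)) ^ 2 := by
    rw [eX, eG, eS]; ring
  refine ⟨main, ?_⟩
  intro μ hμ hpsd
  have hPSD2 : (Z * (μ • (1 : Matrix (Fin r) (Fin r) ℝ) - Δ) * Z).PosSemidef := by
    have h := hpsd.mul_mul_conjTranspose_same Z
    rwa [Matrix.conjTranspose_eq_transpose_of_trivial, hZt] at h
  have htr := trace_nonneg_of_psd hPSD2
  have expand2 : Z * (μ • (1 : Matrix (Fin r) (Fin r) ℝ) - Δ) * Z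
      = μ • (Z*Z) - Z*Δ*Z := by
    rw [Matrix.mul_sub, Matrix.sub_mul, Matrix.mul_smul, Matrix.smul_mul, Matrix.mul_one]
  rw [expand2, Matrix.trace_sub, Matrix.trace_smul, cZΔZ, smul_eq_mul] at htr
  have hfZ : (frobNorm Z) ^ 2 = (Z*Z).trace := by rw [frobSq, hZt]
  have hfS : 0 ≤ (frobNorm (S * Δ * S)) ^ 2 := sq_nonneg _
  rw [main, hfZ]
  linarith
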